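/- Let E be a Hilbert C*-module over a C*-algebra A, B = closure of span⟨E,E⟩, and (J_i) a family of closed left ideals of B. Then ⋂_i E(J_i) = E(⋂_i J_i), where E(J) denotes the closed span of {ξa : ξ ∈ E, a ∈ J}. -/

import Mathlib

open scoped InnerProductSpace RightActions
open Filter Topology

/-- The Hilbert C⋆-module class as it stood in the older Mathlib (right `A`-action through
`Aᵐᵒᵖ`); Mathlib's `CStarModule` now uses a left action with other axioms. -/
class CStarModuleOld (A E : Type*) [NonUnitalSemiring A] [StarRing A] [Module ℂ A]
    [AddCommGroup E] [Module ℂ E] [PartialOrder A] [SMul Aᵐᵒᵖ E] [Norm A] [Norm E]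
    extends Inner A E where
  inner_add_right {x} {y} {z} : inner x (y + z) = inner x y + inner x z
  inner_self_nonneg {x} : 0 ≤ inner x x
  inner_self {x} : inner x x = 0 ↔ x = 0
  inner_op_smul_right {a : A} {x y : E} : inner x (y <• a) = inner x y * a
  inner_smul_right_complex {z : ℂ} {x} {y} : inner x (z • y) = z • inner x y
  star_inner x y : star (inner x y) = inner y x
  norm_eq_sqrt_norm_inner_self x : ‖x‖ = √‖inner x x‖

section Defs

variable (A : Type*) (E : Type*) [NonUnitalCStarAlgebra A] [PartialOrder A] [StarOrderedRing A]
  [NormedAddCommGroup E] [NormedSpace ℂ E] [SMul Aᵐᵒᵖ E] [CStarModuleOld A E]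

/-- An operator on a Hilbert C*-module is *adjointable* if it admits an adjoint with respect to
the `A`-valued inner product. -/
def Adjointable (T : E →L[ℂ] E) : Prop :=
  ∃ S : E →L[ℂ] E, ∀ x y : E, ⟪T x, y⟫_A = ⟪x, S y⟫_A

/-- `EJ A E J` is the closed linear span `E(J)` of `{ξ • a : ξ ∈ E, a ∈ J}`. -/
noncomputable def EJ (J : Set A) : Submodule ℂ E :=
  (Submodule.span ℂ {y : E | ∃ ξ : E, ∃ a ∈ J, y = ξ <• a}).topologicalClosure

/-- `JM A E M` is the closed linear span `J(M)` of `{⟪η, m⟫ : η ∈ E, m ∈ M}`. -/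
noncomputable def JM (M : Set E) : Submodule ℂ A :=
  (Submodule.span ℂ {a : A | ∃ η : E, ∃ m ∈ M, a = ⟪η, m⟫_A}).topologicalClosure

/-- `BS A E` is the C*-algebra `B`, the closure of the linear span of all inner products. -/
noncomputable def BS : Set A :=
  closure (Submodule.span ℂ {a : A | ∃ η ξ : E, a = ⟪η, ξ⟫_A} : Set A)

/-- `KE A E` is `K(E)`, the closed (non-unital) algebra generated by the rank-one operators
`θ_{η,ξ} : x ↦ η • ⟪ξ, x⟫`. -/
noncomputable def KE : NonUnitalSubalgebra ℂ (E →L[ℂ] E) :=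
  (NonUnitalAlgebra.adjoin ℂ
    {T : E →L[ℂ] E | ∃ η ξ : E, ∀ x : E, T x = η <• ⟪ξ, x⟫_A}).topologicalClosure

end Defs

variable {A E : Type*} [NonUnitalCStarAlgebra A] [PartialOrder A] [StarOrderedRing A]
  [NormedAddCommGroup E] [NormedSpace ℂ E] [SMul Aᵐᵒᵖ E] [CStarModuleOld A E]

namespace CStarModuleOld

lemma inner_add_left' {x y z : E} : ⟪x + y, z⟫_A = ⟪x, z⟫_A + ⟪y, z⟫_A := by
  rw [← star_inner z (x + y), inner_add_right, star_add, star_inner, star_inner]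

lemma isSelfAdjoint_inner_self {x : E} : IsSelfAdjoint ⟪x, x⟫_A := star_inner _ _

noncomputable def innerₗ (η : E) : E →ₗ[ℂ] A where
  toFun x := ⟪η, x⟫_A
  map_add' _ _ := inner_add_right
  map_smul' _ _ := by rw [inner_smul_right_complex, RingHom.id_apply]

lemma inner_sub_right {x y z : E} : ⟪x, y - z⟫_A = ⟪x, y⟫_A - ⟪x, z⟫_A :=
  map_sub (innerₗ (A := A) x) y z

lemma inner_sub_left {x y z : E} : ⟪x - y, z⟫_A = ⟪x, z⟫_A - ⟪y, z⟫_A := by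
  rw [← star_inner z (x - y), inner_sub_right, star_sub, star_inner, star_inner]

lemma inner_op_smul_left {a : A} {x y : E} : ⟪x <• a, y⟫_A = star a * ⟪x, y⟫_A := by
  rw [← star_inner y, inner_op_smul_right, star_mul, star_inner]

lemma inner_smul_right_real {r : ℝ} {x y : E} : ⟪x, r • y⟫_A = r • ⟪x, y⟫_A := by
  rw [← Complex.coe_smul, inner_smul_right_complex, Complex.coe_smul]

lemma inner_smul_left_real {r : ℝ} {x y : E} : ⟪r • x, y⟫_A = r • ⟪x, y⟫_A := by
  rw [← star_inner y, inner_smul_right_real, star_smul, star_trivial, star_inner]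

lemma inner_mul_inner_swap_le' {x y : E} :
    ⟪y, x⟫_A * ⟪x, y⟫_A ≤ ‖x‖ ^ 2 • ⟪y, y⟫_A := by
  rcases eq_or_ne x 0 with h | h
  · subst h
    have h0 : ⟪y, (0 : E)⟫_A = 0 := map_zero (innerₗ (A := A) y)
    rw [← star_inner y (0 : E), h0]
    simp
  · have h₁ : ∀ (a : A),
        (0 : A) ≤ ‖x‖ ^ 2 • (star a * a) - ‖x‖ ^ 2 • (star a * ⟪x, y⟫_A)
                  - ‖x‖ ^ 2 • (⟪y, x⟫_A * a) + ‖x‖ ^ 2 • (‖x‖ ^ 2 • ⟪y, y⟫_A) := fun a => by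
      calc (0 : A) ≤ ⟪x <• a - ‖x‖ ^ 2 • y, x <• a - ‖x‖ ^ 2 • y⟫_A := by
                      exact inner_self_nonneg
            _ = star a * (⟪x, x⟫_A * a) - ‖x‖ ^ 2 • (star a * ⟪x, y⟫_A)
                  - ‖x‖ ^ 2 • (⟪y, x⟫_A * a) + ‖x‖ ^ 2 • (‖x‖ ^ 2 • ⟪y, y⟫_A) := by
                      simp only [inner_sub_right, inner_op_smul_right, inner_sub_left,
                        inner_op_smul_left, inner_smul_left_real, inner_smul_right_real,
                        smul_sub, sub_mul, smul_mul_assoc, mul_smul_comm, mul_assoc]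
                      abel
            _ ≤ ‖x‖ ^ 2 • (star a * a) - ‖x‖ ^ 2 • (star a * ⟪x, y⟫_A)
                  - ‖x‖ ^ 2 • (⟪y, x⟫_A * a) + ‖x‖ ^ 2 • (‖x‖ ^ 2 • ⟪y, y⟫_A) := by
                      gcongr
                      rw [← mul_assoc]
                      calc _ ≤ ‖⟪x, x⟫_A‖ • (star a * a) :=
                          CStarAlgebra.star_left_conjugate_le_norm_smul isSelfAdjoint_inner_self
                        _ = (√‖⟪x, x⟫_A‖) ^ 2 • (star a * a) := by
                          rw [Real.sq_sqrt]
                          positivity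
                        _ = ‖x‖ ^ 2 • (star a * a) := by rw [← norm_eq_sqrt_norm_inner_self]
    specialize h₁ ⟪x, y⟫_A
    simp only [star_inner, sub_self, zero_sub, le_neg_add_iff_add_le, add_zero] at h₁
    rwa [smul_le_smul_iff_of_pos_left (pow_pos (norm_pos_iff.mpr h) _)] at h₁

lemma norm_inner_le' {x y : E} : ‖⟪x, y⟫_A‖ ≤ ‖x‖ * ‖y‖ := by
  have := calc ‖⟪x, y⟫_A‖ ^ 2 = ‖⟪y, x⟫_A * ⟪x, y⟫_A‖ := by
                rw [← star_inner x, CStarRing.norm_star_mul_self, pow_two]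
    _ ≤ ‖‖x‖ ^ 2 • ⟪y, y⟫_A‖ := by
                refine CStarAlgebra.norm_le_norm_of_nonneg_of_le ?_ inner_mul_inner_swap_le'
                rw [← star_inner x]
                exact star_mul_self_nonneg ⟪x, y⟫_A
    _ = ‖x‖ ^ 2 * ‖⟪y, y⟫_A‖ := by simp [norm_smul]
    _ = ‖x‖ ^ 2 * ‖y‖ ^ 2 := by
                rw [norm_eq_sqrt_norm_inner_self (A := A) y, Real.sq_sqrt (norm_nonneg _)]
    _ = (‖x‖ * ‖y‖) ^ 2 := by simp only [mul_pow]
  refine (pow_le_pow_iff_left₀ (norm_nonneg ⟪x, y⟫_A) ?_ (by simp)).mp this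
  exact mul_nonneg (norm_nonneg _) (norm_nonneg _)

noncomputable def innerSL (η : E) : E →L[ℂ] A :=
  (innerₗ (A := A) η).mkContinuous ‖η‖ (fun x => norm_inner_le')

lemma innerSL_apply {η x : E} : innerSL (A := A) η x = ⟪η, x⟫_A := rfl

end CStarModuleOld

lemma cfcn_mem_of_closed {a : A} (ha : IsSelfAdjoint a) (S : Submodule ℂ A)
    (hSc : IsClosed (S : Set A)) (hmul : ∀ x ∈ S, ∀ y ∈ S, x * y ∈ S) (haS : a ∈ S)
    (f : ℝ → ℝ) (hf : ContinuousOn f (quasispectrum ℝ a)) (hf0 : f 0 = 0) :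
    cfcₙ f a ∈ S := by
  rw [cfcₙ_apply f a hf hf0 ha]
  set T : NonUnitalStarSubalgebra ℝ (ContinuousMapZero (quasispectrum ℝ a) ℝ) :=
    NonUnitalStarAlgebra.adjoin ℝ {(ContinuousMapZero.id (quasispectrum ℝ a))}
  have hdense : Dense (T : Set (ContinuousMapZero (quasispectrum ℝ a) ℝ)) :=
    ContinuousMapZero.adjoin_id_dense (s := quasispectrum ℝ a)
  have hmem : cfcₙHom (a := a) ha ⟨⟨_, hf.restrict⟩, hf0⟩ ∈
      closure ((cfcₙHom (a := a) ha) '' (T : Set (ContinuousMapZero (quasispectrum ℝ a) ℝ))) := by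
    apply mem_closure_image (cfcₙHom_isClosedEmbedding (a := a) ha).continuous.continuousAt
    rw [hdense.closure_eq]; trivial
  refine hSc.closure_subset_iff.mpr ?_ hmem
  rintro - ⟨g, hg, rfl⟩
  induction hg using NonUnitalStarAlgebra.adjoin_induction with
  | mem x hx =>
    simp only [Set.mem_singleton_iff] at hx
    subst hx
    have : (ContinuousMapZero.id (quasispectrum ℝ a)) =
        (⟨(ContinuousMap.id ℝ).restrict (quasispectrum ℝ a), rfl⟩ :
          ContinuousMapZero (quasispectrum ℝ a) ℝ) := rfl
    rw [cfcₙHom_id ha]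
    exact haS
  | add x hx y hy hx' hy' => rw [map_add]; exact S.add_mem hx' hy'
  | zero => rw [map_zero]; exact S.zero_mem
  | mul x hx y hy hx' hy' => rw [map_mul]; exact hmul _ hx' _ hy'
  | smul r x hx hx' => rw [map_smul]; exact S.smul_mem (r : ℂ) hx'
  | star x hx hx' =>
    rw [star_trivial]
    exact hx'

lemma inner_mem_BS (η ξ : E) : ⟪η, ξ⟫_A ∈ BS A E :=
  subset_closure <| Submodule.subset_span ⟨η, ξ, rfl⟩

lemma inner_mem_of_mem_EJ {J : Submodule ℂ A} (hJclosed : IsClosed (J : Set A))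
    (hJleft : ∀ b ∈ BS A E, ∀ j ∈ J, b * j ∈ J) (η : E) {x : E}
    (hx : x ∈ EJ A E (J : Set A)) : ⟪η, x⟫_A ∈ J := by
  have hle : EJ A E (J : Set A) ≤ J.comap (CStarModuleOld.innerSL (A := A) η : E →L[ℂ] A).toLinearMap := by
    apply Submodule.topologicalClosure_minimal
    · rw [Submodule.span_le]
      rintro - ⟨ξ, a, haJ, rfl⟩
      simp only [SetLike.mem_coe, Submodule.mem_comap, ContinuousLinearMap.coe_coe,
        CStarModuleOld.innerSL_apply, CStarModuleOld.inner_op_smul_right]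
      exact hJleft _ (inner_mem_BS η ξ) a haJ
    · exact hJclosed.preimage (CStarModuleOld.innerSL (A := A) η).continuous
  exact hle hx

lemma mem_EJ_of_inner_mem {K : Set A} (hKclosed : IsClosed (EJ A E K : Set E)) {x : E}
    (hcfc : ∀ f : ℝ → ℝ, ContinuousOn f (quasispectrum ℝ ⟪x, x⟫_A) → f 0 = 0 →
      cfcₙ f ⟪x, x⟫_A ∈ K) : x ∈ EJ A E K := by
  set a : A := ⟪x, x⟫_A with ha_def
  have hsa : IsSelfAdjoint a := CStarModuleOld.isSelfAdjoint_inner_self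
  have hpos : (0 : A) ≤ a := CStarModuleOld.inner_self_nonneg
  have hspec : ∀ t ∈ quasispectrum ℝ a, (0:ℝ) ≤ t :=
    quasispectrum_nonneg_of_nonneg a hpos
  -- the approximating sequence
  set G : ℕ → ℝ → ℝ := fun n t => t * (((n : ℝ) + 1)⁻¹ + t)⁻¹ with hG_def
  have hc : ∀ n : ℕ, (0:ℝ) < ((n : ℝ) + 1)⁻¹ := fun n => by positivity
  have hGc : ∀ n, ContinuousOn (G n) (quasispectrum ℝ a) := by
    intro n
    apply ContinuousOn.mul continuousOn_id
    apply ContinuousOn.inv₀ (continuousOn_const.add continuousOn_id)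
    intro t ht
    have := hspec t ht
    have := hc n
    show ((n : ℝ) + 1)⁻¹ + t ≠ 0
    exact (add_pos_of_pos_of_nonneg (hc n) (hspec t ht)).ne'
  have hG0 : ∀ n, G n 0 = 0 := fun n => by simp [hG_def]
  set u : ℕ → A := fun n => cfcₙ (G n) a with hu_def
  have huK : ∀ n, u n ∈ K := fun n => hcfc (G n) (hGc n) (hG0 n)
  have husa : ∀ n, IsSelfAdjoint (u n) := fun n => cfcₙ_predicate (G n) a
  -- norm estimate
  have hid : ContinuousOn (fun t : ℝ => t) (quasispectrum ℝ a) := continuousOn_id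
  have hnorm : ∀ n : ℕ, ‖x - x <• u n‖ ≤ Real.sqrt (((n : ℝ) + 1)⁻¹) := by
    intro n
    have hinner : ⟪x - x <• u n, x - x <• u n⟫_A
        = a - u n * a - (a * u n - u n * (a * u n)) := by
      rw [CStarModuleOld.inner_sub_right, CStarModuleOld.inner_sub_left, CStarModuleOld.inner_sub_left,
        CStarModuleOld.inner_op_smul_right, CStarModuleOld.inner_op_smul_left,
        CStarModuleOld.inner_op_smul_left, CStarModuleOld.inner_op_smul_right, (husa n).star_eq,
        ← ha_def]
    have h1 : cfcₙ (fun t => t * G n t) a = a * u n := by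
      rw [cfcₙ_mul _ _ a hid (by simp) (hGc n) (hG0 n), cfcₙ_id' ℝ a]
    have h2 : cfcₙ (fun t => G n t * t) a = u n * a := by
      rw [cfcₙ_mul _ _ a (hGc n) (hG0 n) hid (by simp), cfcₙ_id' ℝ a]
    have h3 : cfcₙ (fun t => G n t * (t * G n t)) a = u n * (a * u n) := by
      rw [cfcₙ_mul (G n) (fun t => t * G n t) a (hGc n) (hG0 n)
        (hid.mul (hGc n)) (by simp [hG0 n]), h1]
    have h4 : cfcₙ (fun t => t - G n t * t) a = a - u n * a := by
      rw [cfcₙ_sub (fun t => t) (fun t => G n t * t) a hid (by simp)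
        ((hGc n).mul hid) (by simp [hG0 n]), cfcₙ_id' ℝ a, h2]
    have h5 : cfcₙ (fun t => t * G n t - G n t * (t * G n t)) a
        = a * u n - u n * (a * u n) := by
      rw [cfcₙ_sub (fun t => t * G n t) (fun t => G n t * (t * G n t)) a (hid.mul (hGc n)) (by simp [hG0 n])
        ((hGc n).mul (hid.mul (hGc n))) (by simp [hG0 n]), h1, h3]
    have hkey : ⟪x - x <• u n, x - x <• u n⟫_A
        = cfcₙ (fun t => (t - G n t * t) - (t * G n t - G n t * (t * G n t))) a := by
      rw [cfcₙ_sub (fun t => t - G n t * t) (fun t => t * G n t - G n t * (t * G n t)) a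
        (hid.sub ((hGc n).mul hid)) (by simp [hG0 n])
        ((hid.mul (hGc n)).sub ((hGc n).mul (hid.mul (hGc n))))
        (by simp [hG0 n]), h4, h5, hinner]
    have hbound : ‖⟪x - x <• u n, x - x <• u n⟫_A‖ ≤ ((n : ℝ) + 1)⁻¹ := by
      rw [hkey]
      apply norm_cfcₙ_le
      intro t ht
      have ht0 := hspec t ht
      set c : ℝ := ((n : ℝ) + 1)⁻¹ with hcdef
      have hc0 : 0 < c := hc n
      have hs : 0 < c + t := by positivity
      have hval : (t - G n t * t) - (t * G n t - G n t * (t * G n t))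
          = t * c ^ 2 / (c + t) ^ 2 := by
        simp only [hG_def, ← hcdef]
        field_simp
        ring
      rw [hval, Real.norm_eq_abs, abs_of_nonneg (by positivity)]
      rw [div_le_iff₀ (by positivity)]
      nlinarith [sq_nonneg (c + t), mul_pos hc0 hs]
    calc ‖x - x <• u n‖ = Real.sqrt ‖⟪x - x <• u n, x - x <• u n⟫_A‖ :=
          CStarModuleOld.norm_eq_sqrt_norm_inner_self (x - x <• u n)
      _ ≤ Real.sqrt (((n : ℝ) + 1)⁻¹) := Real.sqrt_le_sqrt hbound
  -- convergence
  have hsq : Tendsto (fun n : ℕ => Real.sqrt (((n : ℝ) + 1)⁻¹)) atTop (𝓝 0) := by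
    have h0 : Tendsto (fun n : ℕ => ((n : ℝ) + 1)⁻¹) atTop (𝓝 0) := by
      exact tendsto_one_div_add_atTop_nhds_zero_nat.congr (fun n => one_div _)
    exact (Real.continuous_sqrt.tendsto' 0 0 (by simp)).comp h0
  have htend : Tendsto (fun n : ℕ => x <• u n) atTop (𝓝 x) := by
    rw [← tendsto_sub_nhds_zero_iff]
    exact squeeze_zero_norm (fun n => by rw [norm_sub_rev]; exact hnorm n) hsq
  have hmem : ∀ n, x <• u n ∈ EJ A E K := fun n =>
    Submodule.le_topologicalClosure _ (Submodule.subset_span ⟨x, u n, huK n, rfl⟩)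
  exact hKclosed.mem_of_tendsto htend (Filter.Eventually.of_forall hmem)

/-- For a family `(Jᵢ)` of closed left ideals of `B = closure span ⟪E,E⟫`,
`⋂ᵢ E(Jᵢ) = E(⋂ᵢ Jᵢ)`. -/
theorem iInter_EJ_eq_EJ_iInter {ι : Type*} (J : ι → Submodule ℂ A)
    (hJB : ∀ i, ((J i : Set A)) ⊆ BS A E) (hJclosed : ∀ i, IsClosed ((J i : Set A)))
    (hJleft : ∀ i, ∀ b ∈ BS A E, ∀ j ∈ J i, b * j ∈ J i) :
    (⋂ i, ((EJ A E (J i : Set A) : Submodule ℂ E) : Set E)) =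
      ((EJ A E (⋂ i, (J i : Set A)) : Submodule ℂ E) : Set E) := by
  apply Set.Subset.antisymm
  · intro x hx
    have hx' : ∀ i, x ∈ EJ A E (J i : Set A) := fun i => Set.mem_iInter.mp hx i
    have haJ : ∀ i, ⟪x, x⟫_A ∈ J i := fun i =>
      inner_mem_of_mem_EJ (hJclosed i) (hJleft i) x (hx' i)
    apply mem_EJ_of_inner_mem (Submodule.isClosed_topologicalClosure _)
    intro f hf hf0
    refine Set.mem_iInter.mpr fun i => ?_
    exact cfcn_mem_of_closed CStarModuleOld.isSelfAdjoint_inner_self (J i) (hJclosed i)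
      (fun p hp q hq => hJleft i p (hJB i hp) q hq) (haJ i) f hf hf0
  · refine Set.subset_iInter fun i => ?_
    have : EJ A E (⋂ i, (J i : Set A)) ≤ EJ A E (J i : Set A) := by
      apply Submodule.topologicalClosure_mono
      apply Submodule.span_mono
      rintro - ⟨ξ, a, haK, rfl⟩
      exact ⟨ξ, a, Set.mem_iInter.mp haK i, rfl⟩
    exact this
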